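/- Fix constants C > 0, ε₀ > 0, and let λ > C·log 2/ε₀. Let Q : [-1,0) → (0,∞) be continuous with Q(t) → ∞ as t → 0⁻, and let P : [-1,0) → [0,∞) satisfy P(t)·|t| ≤ C + δ for all t near 0 (for every δ > 0 eventually). Suppose that whenever s < s' < 0 with Q(s') = 2Q(s) and Q ≤ Q(s') on [-1, s'], one has ∫_s^{s'} P dt ≥ ε₀. Then Q(t)·|t|^λ → 0 as t → 0⁻. -/

import Mathlib

open Filter MeasureTheory

set_option maxHeartbeats 2000000 in
theorem stmt4 (C ε₀ lam : ℝ) (hC : 0 < C) (hε : 0 < ε₀)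
    (hlam : C * Real.log 2 / ε₀ < lam) (Q P : ℝ → ℝ)
    (hQc : ContinuousOn Q (Set.Ico (-1) 0))
    (hQpos : ∀ t ∈ Set.Ico (-1:ℝ) 0, 0 < Q t)
    (hsing : Tendsto Q (nhdsWithin 0 (Set.Iio 0)) atTop)
    (hP : ∀ t ∈ Set.Ico (-1:ℝ) 0, 0 ≤ P t)
    (hPbound : ∀ δ > (0:ℝ), ∀ᶠ t in nhdsWithin 0 (Set.Iio 0), P t * |t| ≤ C + δ)
    (hstep : ∀ s s' : ℝ, -1 ≤ s → s < s' → s' < 0 → Q s' = 2 * Q s →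
      (∀ t ∈ Set.Icc (-1:ℝ) s', Q t ≤ Q s') → ε₀ ≤ ∫ t in s..s', P t) :
    Tendsto (fun t => Q t * |t| ^ lam) (nhdsWithin 0 (Set.Iio 0)) (nhds 0) := by
  have hlog2 : (0:ℝ) < Real.log 2 := Real.log_pos one_lt_two
  have hlam0 : 0 < lam := lt_of_le_of_lt (by positivity) hlam
  -- choose δ
  set δ : ℝ := (lam - C * Real.log 2 / ε₀) * ε₀ / (2 * Real.log 2) with hδdef
  have hδpos : 0 < δ := by
    apply div_pos _ (by positivity)
    have : 0 < lam - C * Real.log 2 / ε₀ := by linarith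
    positivity
  have hCδ : 0 < C + δ := by linarith
  have hkey : (C + δ) * Real.log 2 / ε₀ < lam := by
    have h1 : δ * Real.log 2 / ε₀ = (lam - C * Real.log 2 / ε₀) / 2 := by
      rw [hδdef]; field_simp
    have h2 : (C + δ) * Real.log 2 / ε₀ = C * Real.log 2 / ε₀ + δ * Real.log 2 / ε₀ := by
      ring
    rw [h2, h1]; linarith
  have hkey2 : (C + δ) * Real.log 2 < lam * ε₀ := by
    have := (div_lt_iff₀ hε).mp hkey
    linarith
  set r : ℝ := Real.exp (-(ε₀ / (C + δ))) with hrdef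
  have hr0 : 0 < r := Real.exp_pos _
  have hr1 : r < 1 := Real.exp_lt_one_iff.mpr (by
    have : 0 < ε₀ / (C + δ) := div_pos hε hCδ
    linarith)
  set ρ : ℝ := 2 * r ^ lam with hρdef
  have hrlam_pos : 0 < r ^ lam := Real.rpow_pos_of_pos hr0 _
  have hρ0 : 0 < ρ := by positivity
  have hρ1 : ρ < 1 := by
    have hexp : r ^ lam = Real.exp (-(ε₀ / (C + δ)) * lam) := by
      rw [hrdef, ← Real.exp_mul]
    have hlt : -(ε₀ / (C + δ)) * lam < -Real.log 2 := by
      have h3 : Real.log 2 < ε₀ * lam / (C + δ) := by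
        rw [lt_div_iff₀ hCδ]; nlinarith
      have h4 : -(ε₀ / (C + δ)) * lam = -(ε₀ * lam / (C + δ)) := by ring
      rw [h4]; linarith
    have : r ^ lam < Real.exp (-Real.log 2) := by
      rw [hexp]; exact Real.exp_lt_exp.mpr hlt
    have h5 : Real.exp (-Real.log 2) = 2⁻¹ := by
      rw [Real.exp_neg, Real.exp_log (by norm_num : (0:ℝ) < 2)]
    rw [h5] at this
    rw [hρdef]; linarith
  -- find t₀
  obtain ⟨l, hl0, hlsub⟩ := mem_nhdsLT_iff_exists_Ioo_subset.mp (hPbound δ hδpos)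
  simp only [Set.mem_Iio] at hl0
  set t₀ : ℝ := max l (-2⁻¹) with ht₀def
  have ht₀0 : t₀ < 0 := max_lt hl0 (by norm_num)
  have ht₀1 : (-1:ℝ) < t₀ := lt_of_lt_of_le (by norm_num) (le_max_right _ _)
  have hPb : ∀ t, t₀ < t → t < 0 → P t ≤ -((C + δ) * (1 / t)) := by
    intro t h1 h2
    have hmem : t ∈ Set.Ioo l 0 := ⟨lt_of_le_of_lt (le_max_left _ _) h1, h2⟩
    have hb := hlsub hmem
    simp only [Set.mem_setOf_eq] at hb
    have habs : |t| = -t := abs_of_neg h2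
    rw [habs] at hb
    have hpos : 0 < -t := by linarith
    have : P t ≤ (C + δ) / (-t) := by
      rw [le_div_iff₀ hpos]; linarith [hb]
    calc P t ≤ (C + δ) / (-t) := this
      _ = -((C + δ) * (1 / t)) := by rw [div_neg, mul_one_div]
  -- bound on initial segment
  have hIccsub : Set.Icc (-1:ℝ) t₀ ⊆ Set.Ico (-1) 0 := fun t ht =>
    ⟨ht.1, lt_of_le_of_lt ht.2 ht₀0⟩
  obtain ⟨K, hK⟩ := (isCompact_Icc.image_of_continuousOn (hQc.mono hIccsub)).bddAbove
  have hKb : ∀ t ∈ Set.Icc (-1:ℝ) t₀, Q t ≤ K := fun t ht =>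
    hK (Set.mem_image_of_mem Q ht)
  have hK0 : 0 < K := lt_of_lt_of_le (hQpos t₀ ⟨ht₀1.le, ht₀0⟩)
    (hKb t₀ ⟨ht₀1.le, le_refl _⟩)
  -- hitting-time existence
  have claim : ∀ L : ℝ, K < L → ∃ s, t₀ < s ∧ s < 0 ∧ Q s = L ∧
      ∀ t ∈ Set.Icc (-1:ℝ) s, Q t ≤ L := by
    intro L hL
    have h1 : ∀ᶠ t in nhdsWithin 0 (Set.Iio 0), L ≤ Q t := hsing.eventually_ge_atTop L
    have h2 : Set.Ioo t₀ 0 ∈ nhdsWithin 0 (Set.Iio (0:ℝ)) :=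
      Ioo_mem_nhdsLT_of_mem ⟨ht₀0, le_refl _⟩
    have h2' : ∀ᶠ t in nhdsWithin 0 (Set.Iio (0:ℝ)), t ∈ Set.Ioo t₀ 0 := h2
    obtain ⟨t₁, ht₁Q, ht₁m⟩ := (h1.and h2').exists
    obtain ⟨ht₁l, ht₁0⟩ := ht₁m
    have ht₁1 : (-1:ℝ) < t₁ := ht₀1.trans ht₁l
    set A : Set ℝ := Set.Icc (-1) t₁ ∩ Q ⁻¹' Set.Ici L with hAdef
    have hIccsub' : Set.Icc (-1:ℝ) t₁ ⊆ Set.Ico (-1) 0 := fun t ht =>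
      ⟨ht.1, lt_of_le_of_lt ht.2 ht₁0⟩
    have hAclosed : IsClosed A :=
      (hQc.mono hIccsub').preimage_isClosed_of_isClosed isClosed_Icc isClosed_Ici
    have hAne : A.Nonempty := ⟨t₁, ⟨ht₁1.le, le_refl _⟩, ht₁Q⟩
    have hAbdd : BddBelow A := ⟨-1, fun x hx => hx.1.1⟩
    set s : ℝ := sInf A with hsdef
    have hsA : s ∈ A := hAclosed.csInf_mem hAne hAbdd
    obtain ⟨⟨hs1, hs2⟩, hs3⟩ := hsA
    have hs0 : s < 0 := lt_of_le_of_lt hs2 ht₁0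
    have hst₀ : t₀ < s := by
      by_contra h
      push_neg at h
      have := hKb s ⟨hs1, h⟩
      simp only [Set.mem_preimage, Set.mem_Ici] at hs3
      linarith
    have hbelow : ∀ t, -1 ≤ t → t < s → Q t < L := by
      intro t h1t h2t
      by_contra h
      push_neg at h
      have htA : t ∈ A := ⟨⟨h1t, le_of_lt (lt_of_lt_of_le h2t hs2)⟩, h⟩
      exact absurd (csInf_le hAbdd htA) (not_le.mpr h2t)
    have hQs : Q s = L := by
      simp only [Set.mem_preimage, Set.mem_Ici] at hs3
      refine le_antisymm ?_ hs3
      by_contra h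
      push_neg at h
      have hcont : ContinuousAt Q s := by
        apply hQc.continuousAt
        exact mem_nhds_iff.mpr ⟨Set.Ioo (-1) 0, Set.Ioo_subset_Ico_self, isOpen_Ioo,
          ⟨ht₀1.trans hst₀, hs0⟩⟩
      have hev : ∀ᶠ t in nhdsWithin s (Set.Iio s), Q t ∈ Set.Ioi L :=
        Filter.Eventually.filter_mono nhdsWithin_le_nhds (hcont (Ioi_mem_nhds h))
      have hev2 : ∀ᶠ t in nhdsWithin s (Set.Iio s), t ∈ Set.Ioo (-1:ℝ) s :=
        Ioo_mem_nhdsLT_of_mem ⟨ht₀1.trans hst₀, le_refl _⟩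
      obtain ⟨t, htQ, ht1, ht2⟩ := (hev.and hev2).exists
      exact absurd (hbelow t ht1.le ht2) (not_lt.mpr (le_of_lt htQ))
    exact ⟨s, hst₀, hs0, hQs, fun t ht => by
      rcases eq_or_lt_of_le ht.2 with h | h
      · rw [h, hQs]
      · exact (hbelow t ht.1 h).le⟩
  -- hitting times
  have hKlt : ∀ i : ℕ, K < 2 ^ i * (K + 1) := by
    intro i
    have h1 : (1:ℝ) ≤ 2 ^ i := one_le_pow₀ one_le_two
    nlinarith
  choose s hs₀ hsneg hsQ hsmax using fun i : ℕ => claim (2 ^ i * (K + 1)) (hKlt i)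
  have hMpos : ∀ i : ℕ, (0:ℝ) < 2 ^ i * (K + 1) := fun i => by positivity
  have hslt : ∀ i : ℕ, s i < s (i + 1) := by
    intro i
    by_contra h
    push_neg at h
    have h1 : Q (s (i+1)) ≤ 2 ^ i * (K+1) :=
      hsmax i (s (i+1)) ⟨(ht₀1.trans (hs₀ (i+1))).le, h⟩
    rw [hsQ (i+1), pow_succ] at h1
    have h2 := hMpos i
    nlinarith
  have hratio : ∀ i : ℕ, -s (i+1) ≤ r * (-s i) := by
    intro i
    have ha0 : s i < 0 := hsneg i
    have hb0 : s (i+1) < 0 := hsneg (i+1)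
    have hQd : Q (s (i+1)) = 2 * Q (s i) := by
      rw [hsQ, hsQ, pow_succ]; ring
    have hmax' : ∀ t ∈ Set.Icc (-1:ℝ) (s (i+1)), Q t ≤ Q (s (i+1)) := by
      intro t ht; rw [hsQ (i+1)]; exact hsmax (i+1) t ht
    have hIneq := hstep (s i) (s (i+1)) (by linarith [ht₀1.trans (hs₀ i)]) (hslt i) hb0
      hQd hmax'
    have hint : ε₀ ≤ (C + δ) * Real.log (s i / s (i+1)) := by
      have hgc : ContinuousOn (fun t : ℝ => -((C+δ) * (1/t)))
          (Set.uIcc (s i) (s (i+1))) := by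
        rw [Set.uIcc_of_le (hslt i).le]
        apply ContinuousOn.neg
        apply continuousOn_const.mul
        apply ContinuousOn.div continuousOn_const continuousOn_id
        intro t ht
        exact ne_of_lt (lt_of_le_of_lt ht.2 hb0)
      have hgint : IntervalIntegrable (fun t : ℝ => -((C+δ) * (1/t))) volume
          (s i) (s (i+1)) := hgc.intervalIntegrable
      have hgval : (∫ t in (s i)..(s (i+1)), -((C+δ) * (1/t)))
          = (C+δ) * Real.log (s i / s (i+1)) := by
        rw [intervalIntegral.integral_neg, intervalIntegral.integral_const_mul,
          integral_one_div_of_neg ha0 hb0,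
          show Real.log (s i / s (i+1)) = -Real.log (s (i+1) / s i) from by
            rw [← Real.log_inv, inv_div]]
        ring
      by_cases hPi : IntervalIntegrable P volume (s i) (s (i+1))
      · have hmono := intervalIntegral.integral_mono_on (hslt i).le hPi hgint
          (fun t ht => hPb t (lt_of_lt_of_le (hs₀ i) ht.1) (lt_of_le_of_lt ht.2 hb0))
        rw [hgval] at hmono
        linarith
      · rw [intervalIntegral.integral_undef hPi] at hIneq
        linarith
    have hq : 0 < s i / s (i+1) := div_pos_of_neg_of_neg ha0 hb0
    have hlog : ε₀ / (C+δ) ≤ Real.log (s i / s (i+1)) := by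
      rw [div_le_iff₀ hCδ]; linarith
    have hexple : Real.exp (ε₀/(C+δ)) ≤ s i / s (i+1) :=
      (Real.le_log_iff_exp_le hq).mp hlog
    rw [show s i / s (i+1) = (-s i) / (-s (i+1)) by rw [neg_div_neg_eq]] at hexple
    have hb' : 0 < -s (i+1) := by linarith
    have h6 : Real.exp (ε₀/(C+δ)) * (-s (i+1)) ≤ -s i := (le_div_iff₀ hb').mp hexple
    have h7 : -s (i+1) ≤ (-s i) / Real.exp (ε₀/(C+δ)) := by
      rw [le_div_iff₀ (Real.exp_pos _)]
      nlinarith [Real.exp_pos (ε₀/(C+δ))]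
    calc -s (i+1) ≤ (-s i) / Real.exp (ε₀/(C+δ)) := h7
      _ = r * (-s i) := by rw [hrdef, Real.exp_neg, div_eq_mul_inv, mul_comm]
  have hdecay : ∀ i : ℕ, -s i ≤ r ^ i := by
    intro i
    induction i with
    | zero =>
      have h1 : -2⁻¹ ≤ t₀ := le_max_right _ _
      have h2 := hs₀ 0
      simp only [pow_zero]
      linarith
    | succ n ih =>
      calc -s (n+1) ≤ r * (-s n) := hratio n
        _ ≤ r * r ^ n := by nlinarith
        _ = r ^ (n+1) := by ring
  have hsmono : ∀ i j : ℕ, i ≤ j → s i ≤ s j := fun i j h =>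
    (strictMono_nat_of_lt_succ hslt).monotone h
  -- conclusion
  rw [Metric.tendsto_nhds]
  intro η hη
  have htend : Tendsto (fun n : ℕ => 2 * (K+1) * ρ ^ n) atTop (nhds 0) := by
    have h := tendsto_pow_atTop_nhds_zero_of_lt_one hρ0.le hρ1
    simpa using h.const_mul (2 * (K+1))
  have hev : ∀ᶠ n in atTop, 2 * (K+1) * ρ ^ n < η := htend (gt_mem_nhds hη)
  obtain ⟨N, hN⟩ := hev.exists
  have hmemN : Set.Ioo (s N) 0 ∈ nhdsWithin 0 (Set.Iio (0:ℝ)) :=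
    Ioo_mem_nhdsLT_of_mem ⟨hsneg N, le_refl _⟩
  filter_upwards [hmemN] with t ht
  obtain ⟨htl, ht0⟩ := ht
  have ht1 : (-1:ℝ) < t := lt_trans (ht₀1.trans (hs₀ N)) htl
  have hex : ∃ k, t < s k := by
    have h8 : Tendsto (fun k : ℕ => (r:ℝ) ^ k) atTop (nhds 0) :=
      tendsto_pow_atTop_nhds_zero_of_lt_one hr0.le hr1
    have h9 : ∀ᶠ k in atTop, (r:ℝ) ^ k < -t := h8 (gt_mem_nhds (by linarith : (0:ℝ) < -t))
    obtain ⟨k, hk⟩ := h9.exists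
    exact ⟨k, by linarith [hdecay k]⟩
  have hj0 : 0 < Nat.find hex := Nat.lt_of_le_of_lt (Nat.zero_le N) (by
    by_contra h
    push_neg at h
    have h1 : s (Nat.find hex) ≤ s N := hsmono _ N h
    have h2 : t < s (Nat.find hex) := Nat.find_spec hex
    linarith)
  set i := Nat.find hex - 1 with hidef
  have hi1 : i + 1 = Nat.find hex := Nat.succ_pred_eq_of_pos hj0
  have hNi : N ≤ i := by
    by_contra h
    push_neg at h
    have h1 : s (Nat.find hex) ≤ s N := hsmono _ N (by omega)
    have h2 : t < s (Nat.find hex) := Nat.find_spec hex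
    linarith
  have hsit : s i ≤ t := not_lt.mp (Nat.find_min hex (by omega))
  have hjspec : t < s (i+1) := by rw [hi1]; exact Nat.find_spec hex
  have hQt : Q t ≤ 2 ^ (i+1) * (K+1) := hsmax (i+1) t ⟨ht1.le, hjspec.le⟩
  have habsle : |t| ≤ r ^ i := by
    rw [abs_of_neg ht0]
    linarith [hdecay i]
  have hrpowle : |t| ^ lam ≤ ((r:ℝ) ^ i) ^ lam :=
    Real.rpow_le_rpow (abs_nonneg t) habsle hlam0.le
  have hpoweq : ((r:ℝ) ^ i) ^ lam = (r ^ lam) ^ i := by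
    rw [← Real.rpow_natCast r i, ← Real.rpow_natCast (r ^ lam) i,
      ← Real.rpow_mul hr0.le, ← Real.rpow_mul hr0.le, mul_comm]
  have hQt0 : 0 < Q t := hQpos t ⟨ht1.le, ht0⟩
  have hbound : Q t * |t| ^ lam ≤ 2 * (K+1) * ρ ^ i := by
    have h9 : Q t * |t| ^ lam ≤ (2 ^ (i+1) * (K+1)) * ((r ^ lam) ^ i) := by
      rw [← hpoweq]
      exact mul_le_mul hQt hrpowle (Real.rpow_nonneg (abs_nonneg t) lam) (by positivity)
    calc Q t * |t| ^ lam ≤ (2 ^ (i+1) * (K+1)) * ((r ^ lam) ^ i) := h9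
      _ = 2 * (K+1) * ρ ^ i := by rw [hρdef, mul_pow, pow_succ]; ring
  have hρi : ρ ^ i ≤ ρ ^ N := pow_le_pow_of_le_one hρ0.le hρ1.le hNi
  rw [Real.dist_eq, sub_zero,
    abs_of_nonneg (mul_nonneg hQt0.le (Real.rpow_nonneg (abs_nonneg t) lam))]
  nlinarith [hK0]
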